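/- Let H be a group acting on a set X. Let ℤ[X] denote the free abelian group on X (finitely supported functions X → ℤ) equipped with the induced H-action permuting basis elements, and let j : ℤ[X^H] → ℤ[X] be the injective homomorphism induced by the inclusion of the fixed-point set X^H into X. Then the image of j equals the subgroup of H-invariant elements of ℤ[X] if and only if every H-orbit in X is either infinite or a single point. -/

import Mathlib

open Finsupp MulAction

private lemma range_char {H X : Type*} [Group H] [MulAction H X] (f : X →₀ ℤ) :
    f ∈ Set.range (Finsupp.mapDomain
        (Subtype.val : MulAction.fixedPoints H X → X) :
          (MulAction.fixedPoints H X →₀ ℤ) → (X →₀ ℤ)) ↔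
      ∀ x ∈ f.support, x ∈ MulAction.fixedPoints H X := by
  classical
  constructor
  · rintro ⟨g, rfl⟩ x hx
    have := Finsupp.mapDomain_support hx
    simp only [Finset.mem_image] at this
    obtain ⟨c, _, rfl⟩ := this
    exact c.2
  · intro hsupp
    refine ⟨f.subtypeDomain (· ∈ MulAction.fixedPoints H X), ?_⟩
    ext x
    by_cases hx : x ∈ MulAction.fixedPoints H X
    · have : x = ((⟨x, hx⟩ : MulAction.fixedPoints H X) : X) := rfl
      rw [this, Finsupp.mapDomain_apply Subtype.val_injective,
        Finsupp.subtypeDomain_apply]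
    · rw [Finsupp.mapDomain_notin_range]
      · by_contra h
        exact hx (hsupp x (Finsupp.mem_support_iff.mpr fun h0 => h h0.symm))
      · rintro ⟨c, rfl⟩; exact hx c.2

private lemma inv_apply_aux {H X : Type*} [Group H] [MulAction H X] {f : X →₀ ℤ}
    (hf : ∀ h : H, Finsupp.mapDomain (fun x => h • x) f = f) (h : H) (x : X) :
    f (h • x) = f x := by
  rw [← Finsupp.mapDomain_apply (MulAction.injective h) f x, hf h]

theorem stmt0 {H X : Type*} [Group H] [MulAction H X] :
    (Set.range (Finsupp.mapDomain
        (Subtype.val : MulAction.fixedPoints H X → X) :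
          (MulAction.fixedPoints H X →₀ ℤ) → (X →₀ ℤ)) =
      {f : X →₀ ℤ | ∀ h : H, Finsupp.mapDomain (fun x => h • x) f = f}) ↔
    ∀ x : X, (MulAction.orbit H x).Infinite ∨ MulAction.orbit H x = {x} := by
  classical
  constructor
  · intro heq x
    by_contra hcon
    push_neg at hcon
    obtain ⟨hfin, hne⟩ := hcon
    set f : X →₀ ℤ := Finsupp.indicator hfin.toFinset (fun _ _ => 1) with hfdef
    have fapp : ∀ a : X, f a = if a ∈ MulAction.orbit H x then 1 else 0 := by
      intro a
      by_cases ha : a ∈ MulAction.orbit H x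
      · rw [if_pos ha, hfdef, Finsupp.indicator_of_mem (hfin.mem_toFinset.mpr ha)]
      · rw [if_neg ha, hfdef, Finsupp.indicator_of_notMem
          (fun h => ha (hfin.mem_toFinset.mp h))]
    have hinv : f ∈ {f : X →₀ ℤ | ∀ h : H, Finsupp.mapDomain (fun x => h • x) f = f} := by
      intro h
      rw [show (fun x : X => h • x) = ⇑(MulAction.toPerm h) from rfl]
      ext a
      rw [Finsupp.mapDomain_equiv_apply, fapp, fapp]
      have : (MulAction.toPerm h).symm a ∈ MulAction.orbit H x ↔
          a ∈ MulAction.orbit H x := by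
        constructor
        · intro hm
          have := MulAction.orbit_eq_iff.mpr hm
          rw [← this]
          show a ∈ MulAction.orbit H (h⁻¹ • a)
          exact MulAction.mem_orbit_smul h⁻¹ a
        · intro hm
          rw [← MulAction.orbit_eq_iff.mpr hm]
          exact MulAction.mem_orbit _ h⁻¹
      rw [if_congr this rfl rfl]
    rw [← heq, range_char] at hinv
    have hxmem : x ∈ f.support := by
      rw [Finsupp.mem_support_iff, fapp, if_pos (MulAction.mem_orbit_self x)]
      exact one_ne_zero
    have hxfix := hinv x hxmem
    apply hne
    ext y
    constructor
    · rintro ⟨h, rfl⟩; exact hxfix h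
    · rintro rfl; exact MulAction.mem_orbit_self _
  · intro horb
    ext f
    rw [range_char]
    constructor
    · intro hsupp h
      ext a
      rw [show (fun x : X => h • x) = ⇑(MulAction.toPerm h) from rfl,
        Finsupp.mapDomain_equiv_apply]
      by_cases ha : a ∈ f.support
      · have := hsupp a ha
        show f (h⁻¹ • a) = f a
        rw [this h⁻¹]
      · have ha' : (MulAction.toPerm h).symm a ∉ f.support := by
          intro hmem
          have := hsupp _ hmem
          have : h • ((MulAction.toPerm h).symm a) = a := by simp
          apply ha
          rw [← this]
          rw [hsupp _ hmem h]
          exact hmem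
        rw [Finsupp.notMem_support_iff.mp ha, Finsupp.notMem_support_iff.mp ha']
    · intro hf x hx
      have horbsub : MulAction.orbit H x ⊆ (f.support : Set X) := by
        rintro y ⟨h, rfl⟩
        rw [Finset.mem_coe, Finsupp.mem_support_iff, inv_apply_aux hf]
        exact Finsupp.mem_support_iff.mp hx
      have hfin : ¬ (MulAction.orbit H x).Infinite := fun hinf =>
        hinf (Set.Finite.subset f.support.finite_toSet horbsub)
      have hsing := (horb x).resolve_left hfin
      intro h
      have : h • x ∈ MulAction.orbit H x := MulAction.mem_orbit _ h
      rw [hsing] at this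
      exact this
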